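/- Let A₁ and A₂ be symmetric positive definite linear maps on Euclidean spaces X and Y respectively, and let M : X → Y be a bounded linear operator. If ‖A₂^{−1/2} M A₁^{−1/2}‖ < 1, then the block operator A on X × Y given by A(x, y) = (A₁x + M*y, Mx + A₂y) is positive definite. -/

import Mathlib

open Filter Topology Set
open scoped InnerProductSpace RealInnerProductSpace Pointwise

noncomputable section

/-- The inertial parameter condition on the extrapolation parameters `αs` and the
relaxation parameters `ρs`. -/
def InertialCond (αs ρs : ℕ → ℝ) : Prop :=
  ∃ α ρ θ δ : ℝ,
    Monotone αs ∧ αs 1 = 0 ∧ (∀ k, 1 ≤ k → 0 ≤ αs k ∧ αs k ≤ α) ∧ 0 ≤ α ∧ α < 1 ∧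
    0 < ρ ∧ 0 < θ ∧ 0 < δ ∧
    (α ^ 2 * (1 + α) + α * θ) / (1 - α ^ 2) < δ ∧
    (∀ k, 1 ≤ k → ρ ≤ ρs k ∧
      ρs k < (δ - α * (α * (1 + α) + α * δ + θ)) / (δ * (1 + α * (1 + α) + α * δ + θ)))

variable {H : Type*} [NormedAddCommGroup H] [InnerProductSpace ℝ H]

/-- `g` is a proper, lower semicontinuous, convex function with values in `(-∞, +∞]`. -/
def Gamma0 (g : H → EReal) : Prop :=
  (∃ x, g x ≠ ⊤) ∧ (∀ x, g x ≠ ⊥) ∧ LowerSemicontinuous g ∧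
  ∀ x y : H, ∀ a b : ℝ, 0 ≤ a → 0 ≤ b → a + b = 1 →
    g (a • x + b • y) ≤ (a : EReal) * g x + (b : EReal) * g y

/-- The Legendre–Fenchel conjugate of `h`. -/
def fenchel (h : H → EReal) (y : H) : EReal :=
  ⨆ x : H, ((⟪y, x⟫_ℝ : ℝ) : EReal) - h x

/-- `p = prox_{τ g}(u)`, i.e. `p` minimizes `w ↦ g w + ‖u - w‖² / (2τ)`. -/
def IsProx (g : H → EReal) (τ : ℝ) (u p : H) : Prop :=
  ∀ w, g p + ((1 / (2 * τ) * ‖u - p‖ ^ 2 : ℝ) : EReal) ≤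
    g w + ((1 / (2 * τ) * ‖u - w‖ ^ 2 : ℝ) : EReal)

/-- `p = prox_{S g}(u)` for a positive definite map `S` with inverse `Sinv`, i.e. `p`
minimizes `w ↦ g w + (1/2) ⟪S⁻¹ (u - w), u - w⟫`. -/
def IsProxOp (g : H → EReal) (Sinv : H →L[ℝ] H) (u p : H) : Prop :=
  ∀ w, g p + ((1 / 2 * ⟪Sinv (u - p), u - p⟫_ℝ : ℝ) : EReal) ≤
    g w + ((1 / 2 * ⟪Sinv (u - w), u - w⟫_ℝ : ℝ) : EReal)

/-- `B` is cocoercive with respect to `Linv = L⁻¹`. -/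
def CocoerciveWrt (B : H → H) (Linv : H →L[ℝ] H) : Prop :=
  ∀ x y : H, ⟪Linv (B x - B y), B x - B y⟫_ℝ ≤ ⟪B x - B y, x - y⟫_ℝ

/-- `L` is a selfadjoint positive definite (bounded linear) map. -/
def PosDefSA (L : H →L[ℝ] H) : Prop :=
  (∀ x y : H, ⟪L x, y⟫_ℝ = ⟪x, L y⟫_ℝ) ∧ ∀ x : H, x ≠ 0 → 0 < ⟪L x, x⟫_ℝ

/-- `Linv` is a two-sided inverse of `L`. -/
def InvPair (L Linv : H →L[ℝ] H) : Prop :=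
  (∀ x, L (Linv x) = x) ∧ (∀ x, Linv (L x) = x)

/-- The subdifferential of an extended-real-valued convex function. -/
def subdiff (g : H → EReal) (x : H) : Set H :=
  {u | ∀ z, g x + ((⟪u, z - x⟫_ℝ : ℝ) : EReal) ≤ g z}

/-- The diagonal operator on `EuclideanSpace ℝ (Fin q)` with diagonal entries `t`. -/
def diagOp {q : ℕ} (t : Fin q → ℝ) :
    EuclideanSpace ℝ (Fin q) →L[ℝ] EuclideanSpace ℝ (Fin q) :=
  LinearMap.toContinuousLinearMap
  { toFun := fun x => WithLp.toLp 2 (fun i => t i * x i)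
    map_add' := by intro x y; ext i; simp [mul_add]
    map_smul' := by intro c x; ext i; simp [smul_eq_mul]; ring }

/-- The positive semidefinite square root of a positive semidefinite matrix
(the definition of the older Mathlib, removed since). -/
def Matrix.PosSemidef.sqrt {𝕜 n : Type*} [RCLike 𝕜] [PartialOrder 𝕜] [StarOrderedRing 𝕜]
    [Fintype n] [DecidableEq n]
    {A : Matrix n n 𝕜} (hA : A.PosSemidef) : Matrix n n 𝕜 :=
  (hA.1.eigenvectorUnitary : Matrix n n 𝕜) *
    Matrix.diagonal ((↑) ∘ (Real.sqrt ∘ hA.1.eigenvalues)) *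
    (star (hA.1.eigenvectorUnitary : Matrix n n 𝕜))

end
theorem Matrix.PosSemidef.posSemidef_sqrt {n : Type*} [Fintype n] [DecidableEq n]
    {A : Matrix n n ℝ} (hA : A.PosSemidef) : hA.sqrt.PosSemidef := by
  unfold Matrix.PosSemidef.sqrt
  rw [Matrix.star_eq_conjTranspose]
  refine Matrix.PosSemidef.mul_mul_conjTranspose_same (Matrix.PosSemidef.diagonal ?_) _
  intro i
  simp only [Pi.zero_apply, Function.comp_apply]
  exact Real.sqrt_nonneg _

theorem Matrix.PosSemidef.sqrt_mul_self {n : Type*} [Fintype n] [DecidableEq n]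
    {A : Matrix n n ℝ} (hA : A.PosSemidef) : hA.sqrt * hA.sqrt = A := by
  unfold Matrix.PosSemidef.sqrt
  conv_rhs => rw [hA.1.spectral_theorem, Unitary.conjStarAlgAut_apply]
  have hU : (star (hA.1.eigenvectorUnitary : Matrix n n ℝ)) * (hA.1.eigenvectorUnitary : Matrix n n ℝ) = 1 :=
    Unitary.coe_star_mul_self _
  have hD : Matrix.diagonal ((RCLike.ofReal : ℝ → ℝ) ∘ (Real.sqrt ∘ hA.1.eigenvalues)) *
      Matrix.diagonal ((RCLike.ofReal : ℝ → ℝ) ∘ (Real.sqrt ∘ hA.1.eigenvalues)) =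
      Matrix.diagonal (RCLike.ofReal ∘ hA.1.eigenvalues) := by
    rw [Matrix.diagonal_mul_diagonal]
    congr 1
    funext i
    simp [Real.mul_self_sqrt (hA.eigenvalues_nonneg i)]
  calc _ = (hA.1.eigenvectorUnitary : Matrix n n ℝ) *
        (Matrix.diagonal ((RCLike.ofReal : ℝ → ℝ) ∘ (Real.sqrt ∘ hA.1.eigenvalues)) *
        ((star (hA.1.eigenvectorUnitary : Matrix n n ℝ)) * (hA.1.eigenvectorUnitary : Matrix n n ℝ)) *
        Matrix.diagonal ((RCLike.ofReal : ℝ → ℝ) ∘ (Real.sqrt ∘ hA.1.eigenvalues))) *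
        (star (hA.1.eigenvectorUnitary : Matrix n n ℝ)) := by
          simp only [Matrix.mul_assoc]
    _ = _ := by rw [hU, Matrix.mul_one, hD]

open Matrix in
set_option maxHeartbeats 1600000 in
theorem fromBlocks_posDef_of_opNorm_lt_one
    {n m : ℕ}
    (A₁ : Matrix (Fin n) (Fin n) ℝ) (A₂ : Matrix (Fin m) (Fin m) ℝ)
    (M : Matrix (Fin m) (Fin n) ℝ)
    (hA₁ : A₁.PosDef) (hA₂ : A₂.PosDef)
    (hnorm : ‖LinearMap.toContinuousLinearMap
        (Matrix.toEuclideanLin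
          ((hA₂.posSemidef.sqrt)⁻¹ * M * (hA₁.posSemidef.sqrt)⁻¹))‖ < 1) :
    (Matrix.fromBlocks A₁ M.transpose M A₂).PosDef := by
  classical
  set S₁ := hA₁.posSemidef.sqrt with hS₁def
  set S₂ := hA₂.posSemidef.sqrt with hS₂def
  have hS₁sym : S₁ᵀ = S₁ := by
    rw [← Matrix.conjTranspose_eq_transpose_of_trivial]
    exact hA₁.posSemidef.posSemidef_sqrt.1
  have hS₂sym : S₂ᵀ = S₂ := by
    rw [← Matrix.conjTranspose_eq_transpose_of_trivial]
    exact hA₂.posSemidef.posSemidef_sqrt.1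
  have hS₁sq : S₁ * S₁ = A₁ := hA₁.posSemidef.sqrt_mul_self
  have hS₂sq : S₂ * S₂ = A₂ := hA₂.posSemidef.sqrt_mul_self
  have hdet₁ : IsUnit S₁.det := by
    have h : S₁.det * S₁.det = A₁.det := by rw [← Matrix.det_mul, hS₁sq]
    have hp := hA₁.det_pos
    refine isUnit_iff_ne_zero.mpr fun h0 => ?_
    rw [h0, mul_zero] at h; rw [← h] at hp; exact lt_irrefl _ hp
  have hdet₂ : IsUnit S₂.det := by
    have h : S₂.det * S₂.det = A₂.det := by rw [← Matrix.det_mul, hS₂sq]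
    have hp := hA₂.det_pos
    refine isUnit_iff_ne_zero.mpr fun h0 => ?_
    rw [h0, mul_zero] at h; rw [← h] at hp; exact lt_irrefl _ hp
  clear_value S₁ S₂
  set N := S₂⁻¹ * M * S₁⁻¹ with hNdef
  have hM : S₂ * N * S₁ = M := by
    rw [hNdef]
    simp only [Matrix.mul_assoc]
    rw [Matrix.nonsing_inv_mul _ hdet₁, Matrix.mul_one, ← Matrix.mul_assoc,
      Matrix.mul_nonsing_inv _ hdet₂, Matrix.one_mul]
  clear_value N
  rw [Matrix.posDef_iff_dotProduct_mulVec]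
  constructor
  · refine Matrix.IsHermitian.fromBlocks hA₁.1 ?_ hA₂.1
    rw [Matrix.conjTranspose_eq_transpose_of_trivial, Matrix.transpose_transpose]
  · intro x hx
    set x₁ : Fin n → ℝ := x ∘ Sum.inl with hx₁def
    set x₂ : Fin m → ℝ := x ∘ Sum.inr with hx₂def
    set u : Fin n → ℝ := S₁ *ᵥ x₁ with hudef
    set v : Fin m → ℝ := S₂ *ᵥ x₂ with hvdef
    set w : Fin m → ℝ := N *ᵥ u with hwdef
    -- rewrite the quadratic form
    have hsum : ∀ (a : Fin n → ℝ) (b : Fin m → ℝ),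
        x ⬝ᵥ Sum.elim a b = x₁ ⬝ᵥ a + x₂ ⬝ᵥ b := by
      intro a b
      simp [dotProduct, Fintype.sum_sum_type, hx₁def, hx₂def]
    have hq1 : x₁ ⬝ᵥ (A₁ *ᵥ x₁) = u ⬝ᵥ u := by
      rw [← hS₁sq, ← Matrix.mulVec_mulVec, Matrix.dotProduct_mulVec,
        ← Matrix.mulVec_transpose, hS₁sym]
    have hq2 : x₂ ⬝ᵥ (A₂ *ᵥ x₂) = v ⬝ᵥ v := by
      rw [← hS₂sq, ← Matrix.mulVec_mulVec, Matrix.dotProduct_mulVec,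
        ← Matrix.mulVec_transpose, hS₂sym]
    have hq3 : x₂ ⬝ᵥ (M *ᵥ x₁) = v ⬝ᵥ w := by
      rw [← hM]
      rw [← Matrix.mulVec_mulVec, ← Matrix.mulVec_mulVec, Matrix.dotProduct_mulVec,
        ← Matrix.mulVec_transpose, hS₂sym]
    have hq4 : x₁ ⬝ᵥ (Mᵀ *ᵥ x₂) = v ⬝ᵥ w := by
      rw [Matrix.mulVec_transpose, dotProduct_comm, ← Matrix.dotProduct_mulVec, hq3]
    have hQ : star x ⬝ᵥ ((Matrix.fromBlocks A₁ Mᵀ M A₂) *ᵥ x) =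
        u ⬝ᵥ u + v ⬝ᵥ v + 2 * (v ⬝ᵥ w) := by
      rw [star_trivial, Matrix.fromBlocks_mulVec, hsum, dotProduct_add,
        dotProduct_add, hq1, hq2, hq3, hq4]
      ring
    rw [hQ]
    -- move to EuclideanSpace
    set u' : EuclideanSpace ℝ (Fin n) := (WithLp.equiv 2 _).symm u with hu'def
    set v' : EuclideanSpace ℝ (Fin m) := (WithLp.equiv 2 _).symm v with hv'def
    set T := LinearMap.toContinuousLinearMap (Matrix.toEuclideanLin N) with hTdef
    have hTu : T u' = (WithLp.equiv 2 _).symm w := by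
      rw [hTdef, hu'def]
      simp [Matrix.toEuclideanLin_apply, hwdef]
    have hinner : ∀ (q : ℕ) (a b : Fin q → ℝ),
        (inner ℝ ((WithLp.equiv 2 (Fin q → ℝ)).symm a) ((WithLp.equiv 2 (Fin q → ℝ)).symm b) : ℝ)
          = a ⬝ᵥ b := by
      intro q a b
      simp [PiLp.inner_apply, dotProduct, mul_comm]
    have huu : u ⬝ᵥ u = ‖u'‖ ^ 2 := by
      rw [← real_inner_self_eq_norm_sq, hu'def, hinner]
    have hvv : v ⬝ᵥ v = ‖v'‖ ^ 2 := by
      rw [← real_inner_self_eq_norm_sq, hv'def, hinner]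
    have hvw : v ⬝ᵥ w = (inner ℝ v' (T u') : ℝ) := by
      rw [hTu, hv'def, hinner]
    have hc : -(‖v'‖ * (‖T‖ * ‖u'‖)) ≤ (inner ℝ v' (T u') : ℝ) := by
      have h1 := abs_real_inner_le_norm v' (T u')
      have h2 : ‖v'‖ * ‖T u'‖ ≤ ‖v'‖ * (‖T‖ * ‖u'‖) :=
        mul_le_mul_of_nonneg_left (T.le_opNorm u') (norm_nonneg _)
      have := neg_abs_le (inner ℝ v' (T u') : ℝ)
      linarith
    clear_value u v w u' v' T
    -- nonvanishing
    have hx' : x₁ ≠ 0 ∨ x₂ ≠ 0 := by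
      by_contra h
      push_neg at h
      apply hx
      funext i
      cases i with
      | inl i => exact congrFun h.1 i
      | inr i => exact congrFun h.2 i
    have hpos : 0 < ‖u'‖ ^ 2 + ‖v'‖ ^ 2 := by
      rcases hx' with h | h
      · have hu0 : u ≠ 0 := by
          intro h0
          exact h ((Matrix.mulVec_injective_iff_isUnit.mpr
            ((Matrix.isUnit_iff_isUnit_det _).mpr hdet₁)).eq_iff.mp
            (by rw [← hudef, h0, Matrix.mulVec_zero]))
        have : u' ≠ 0 := by
          rw [hu'def, ne_eq, Equiv.symm_apply_eq]
          exact hu0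
        have := norm_pos_iff.mpr this
        nlinarith [sq_nonneg ‖v'‖]
      · have hv0 : v ≠ 0 := by
          intro h0
          exact h ((Matrix.mulVec_injective_iff_isUnit.mpr
            ((Matrix.isUnit_iff_isUnit_det _).mpr hdet₂)).eq_iff.mp
            (by rw [← hvdef, h0, Matrix.mulVec_zero]))
        have : v' ≠ 0 := by
          rw [hv'def, ne_eq, Equiv.symm_apply_eq]
          exact hv0
        have := norm_pos_iff.mpr this
        nlinarith [sq_nonneg ‖u'‖]
    have hk0 : (0:ℝ) ≤ ‖T‖ := norm_nonneg _
    rw [huu, hvv, hvw]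
    nlinarith [mul_pos (sub_pos.mpr hnorm) hpos,
      mul_nonneg hk0 (sq_nonneg (‖u'‖ - ‖v'‖)), hc]
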